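/- For all positive integers r, s: (i) Φ_{r,s}(h_{r,s}(t), c(t)) = 0 for every t ∈ ℂ∖{0}; and (ii) conversely, if (h, c) ∈ ℂ² satisfies Φ_{r,s}(h, c) = 0, then there exists t ∈ ℂ∖{0} with c = c(t) and h = h_{r,s}(t). -/

import Mathlib

/-- `Φ_{r,s}(h,c) = (h + (r²−1)(c−13)/24 + (rs−1)/2)(h + (s²−1)(c−13)/24 + (rs−1)/2)
      + (r²−s²)²/16`. -/
noncomputable def PhiKac (r s : ℕ) (h c : ℂ) : ℂ :=
  (h + ((r : ℂ) ^ 2 - 1) * (c - 13) / 24 + ((r : ℂ) * (s : ℂ) - 1) / 2) *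
    (h + ((s : ℂ) ^ 2 - 1) * (c - 13) / 24 + ((r : ℂ) * (s : ℂ) - 1) / 2) +
    ((r : ℂ) ^ 2 - (s : ℂ) ^ 2) ^ 2 / 16

/-- `c(t) = 6t + 13 + 6/t`. -/
noncomputable def cKac (t : ℂ) : ℂ := 6 * t + 13 + 6 / t

/-- `h_{r,s}(t) = ((1+t)² − (s+tr)²)/(4t)`. -/
noncomputable def hKac (r s : ℕ) (t : ℂ) : ℂ :=
  ((1 + t) ^ 2 - ((s : ℂ) + t * (r : ℂ)) ^ 2) / (4 * t)

lemma hKac_inv (r s : ℕ) (t : ℂ) (ht : t ≠ 0) :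
    hKac r s (1/t) = ((t + 1) ^ 2 - ((s : ℂ) * t + r) ^ 2) / (4 * t) := by
  unfold hKac
  field_simp

lemma phi_factor (r s : ℕ) (h t : ℂ) (ht : t ≠ 0) :
    PhiKac r s h (cKac t) = (h - hKac r s t) * (h - hKac r s (1/t)) := by
  have hu : t * t⁻¹ = 1 := mul_inv_cancel₀ ht
  rw [hKac_inv r s t ht]
  unfold PhiKac cKac hKac
  field_simp
  ring

lemma cKac_inv (t : ℂ) (ht : t ≠ 0) : cKac (1/t) = cKac t := by
  unfold cKac
  field_simp
  ring

/-- For all positive integers `r, s`: (i) `Φ_{r,s}(h_{r,s}(t), c(t)) = 0` for every `t ≠ 0`;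
(ii) conversely, every zero `(h,c)` of `Φ_{r,s}` lies on this curve: there is `t ≠ 0` with
`c = c(t)` and `h = h_{r,s}(t)`. -/
theorem stmt12 (r s : ℕ) (hr : 0 < r) (hs : 0 < s) :
    (∀ t : ℂ, t ≠ 0 → PhiKac r s (hKac r s t) (cKac t) = 0) ∧
    (∀ h c : ℂ, PhiKac r s h c = 0 → ∃ t : ℂ, t ≠ 0 ∧ c = cKac t ∧ h = hKac r s t) := by
  constructor
  · intro t ht
    rw [phi_factor r s _ t ht]
    simp
  · intro h c hphi
    obtain ⟨z, hz⟩ : ∃ z : ℂ, z ^ 2 = (c - 13) ^ 2 - 144 :=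
      IsAlgClosed.exists_pow_nat_eq ((c - 13) ^ 2 - 144) (n := 2) (by norm_num)
    set t : ℂ := ((c - 13) + z) / 12 with htdef
    have hquad : 6 * t ^ 2 + (13 - c) * t + 6 = 0 := by
      rw [htdef]; field_simp; linear_combination 6 * hz
    have ht : t ≠ 0 := by
      intro h0
      rw [h0] at hquad
      simp at hquad
    have hc : c = cKac t := by
      unfold cKac
      field_simp
      linear_combination -hquad
    rw [hc, phi_factor r s h t ht] at hphi
    rcases mul_eq_zero.mp hphi with h1 | h1
    · exact ⟨t, ht, hc, sub_eq_zero.mp h1⟩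
    · refine ⟨1/t, one_div_ne_zero ht, ?_, sub_eq_zero.mp h1⟩
      rw [cKac_inv t ht]; exact hc
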